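/- Let 𝓗 be a real Hilbert space, m > 0, and A : 𝓗 → 𝓗* a strongly monotone map with monotonicity constant m. Let R > 0 and 𝓑 = {u ∈ 𝓗 : ‖u‖ ≤ R}, and suppose the restriction of A to 𝓑 is Lipschitz continuous with Lipschitz constant M. Let J : 𝓗 → 𝓗* be the duality map and fix f ∈ 𝓗*. Define Q : 𝓑 → 𝓗 by Qu = u − (m/M²)·J^{−1}(Au − f). Then Q is a contraction on 𝓑 with contraction constant √(1 − m²/M²): ‖Qu − Qv‖ ≤ √(1 − m²/M²)·‖u − v‖ for all u, v ∈ 𝓑. -/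

import Mathlib

open Filter Topology RealInnerProductSpace

/-- **The iteration map is a contraction.**
Let `𝓗` be a real Hilbert space, `A : 𝓗 → 𝓗*` strongly monotone with constant `m > 0`,
Lipschitz with constant `M` on the closed ball `𝓑` of radius `R`, let `J` be the duality map and
`f ∈ 𝓗*`.  Then `Q u = u - (m/M²) J⁻¹(Au - f)` is a contraction on `𝓑` with contraction
constant `√(1 - m²/M²)`. -/
theorem iteration_map_contraction
    {𝓗 : Type*} [NormedAddCommGroup 𝓗] [InnerProductSpace ℝ 𝓗] [CompleteSpace 𝓗]
    (m : ℝ) (hm : 0 < m) (A : 𝓗 → StrongDual ℝ 𝓗)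
    (hmono : ∀ u v : 𝓗, m * ‖u - v‖ ^ 2 ≤ (A u - A v) (u - v))
    (R : ℝ) (hR : 0 < R) (M : ℝ) (hmM : m ≤ M)
    (hlip : ∀ u v : 𝓗, ‖u‖ ≤ R → ‖v‖ ≤ R → ‖A u - A v‖ ≤ M * ‖u - v‖)
    (f : StrongDual ℝ 𝓗) :
    ∀ u v : 𝓗, ‖u‖ ≤ R → ‖v‖ ≤ R →
      ‖(u - (m / M ^ 2) • (InnerProductSpace.toDual ℝ 𝓗).symm (A u - f)) -
          (v - (m / M ^ 2) • (InnerProductSpace.toDual ℝ 𝓗).symm (A v - f))‖ ≤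
        Real.sqrt (1 - m ^ 2 / M ^ 2) * ‖u - v‖ := by
  intro u v hu hv
  have hM : 0 < M := lt_of_lt_of_le hm hmM
  set c : ℝ := m / M ^ 2 with hc
  set w : 𝓗 := u - v with hw
  set a : 𝓗 := (InnerProductSpace.toDual ℝ 𝓗).symm (A u - A v) with ha
  have hkey : (u - c • (InnerProductSpace.toDual ℝ 𝓗).symm (A u - f)) -
      (v - c • (InnerProductSpace.toDual ℝ 𝓗).symm (A v - f)) = w - c • a := by
    rw [ha, hw]
    have : (InnerProductSpace.toDual ℝ 𝓗).symm (A u - A v)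
        = (InnerProductSpace.toDual ℝ 𝓗).symm (A u - f)
          - (InnerProductSpace.toDual ℝ 𝓗).symm (A v - f) := by
      rw [← map_sub]; congr 1; abel
    rw [this, smul_sub]
    abel
  rw [hkey]
  -- inner product facts
  have hinner : (m : ℝ) * ‖w‖ ^ 2 ≤ (inner ℝ a w : ℝ) := by
    have := hmono u v
    have haw : (inner ℝ a w : ℝ) = (A u - A v) (u - v) := by
      rw [ha, hw]
      exact InnerProductSpace.toDual_symm_apply (𝕜 := ℝ) (E := 𝓗)
    rw [haw]; exact this
  have hanorm : ‖a‖ ≤ M * ‖w‖ := by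
    have : ‖a‖ = ‖A u - A v‖ := by
      rw [ha]; exact (LinearIsometryEquiv.norm_map _ _)
    rw [this, hw]; exact hlip u v hu hv
  have hcpos : 0 < c := div_pos hm (by positivity)
  -- square comparison
  have hsq : ‖w - c • a‖ ^ 2 ≤ (1 - m ^ 2 / M ^ 2) * ‖w‖ ^ 2 := by
    have hexp : ‖w - c • a‖ ^ 2 = ‖w‖ ^ 2 - 2 * c * (inner ℝ a w : ℝ) + c ^ 2 * ‖a‖ ^ 2 := by
      rw [norm_sub_sq_real, real_inner_smul_right, norm_smul, real_inner_comm]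
      rw [Real.norm_eq_abs, abs_of_pos hcpos]
      ring
    rw [hexp]
    have h1 : 2 * c * (m * ‖w‖ ^ 2) ≤ 2 * c * (inner ℝ a w : ℝ) := by
      apply mul_le_mul_of_nonneg_left hinner (by positivity)
    have h2 : c ^ 2 * ‖a‖ ^ 2 ≤ c ^ 2 * (M * ‖w‖) ^ 2 := by
      apply mul_le_mul_of_nonneg_left _ (by positivity)
      exact pow_le_pow_left₀ (norm_nonneg _) hanorm 2
    have : ‖w‖ ^ 2 - 2 * c * (inner ℝ a w : ℝ) + c ^ 2 * ‖a‖ ^ 2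
        ≤ ‖w‖ ^ 2 - 2 * c * (m * ‖w‖ ^ 2) + c ^ 2 * (M * ‖w‖) ^ 2 := by linarith
    refine this.trans (le_of_eq ?_)
    rw [hc]
    field_simp
    ring
  have hnn : (0:ℝ) ≤ 1 - m ^ 2 / M ^ 2 := by
    have : m ^ 2 ≤ M ^ 2 := by nlinarith
    have : m ^ 2 / M ^ 2 ≤ 1 := by
      rw [div_le_one (by positivity)]; exact this
    linarith
  calc ‖w - c • a‖ = Real.sqrt (‖w - c • a‖ ^ 2) := by
        rw [Real.sqrt_sq (norm_nonneg _)]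
    _ ≤ Real.sqrt ((1 - m ^ 2 / M ^ 2) * ‖w‖ ^ 2) := Real.sqrt_le_sqrt hsq
    _ = Real.sqrt (1 - m ^ 2 / M ^ 2) * ‖w‖ := by
        rw [Real.sqrt_mul hnn, Real.sqrt_sq (norm_nonneg _)]
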